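/- Let k be a commutative ring, G a finite group, K and H subgroups of G, and g ∈ G. Then the (kK, kH)-bimodule kK ⊗_{k[K ∩ gHg⁻¹]} k[gH] is isomorphic to the (kK, kH)-bimodule k[KgH] spanned by the double coset KgH inside kG, where k[gH] carries the (k[gHg⁻¹], kH)-bimodule structure given by (gh₁g⁻¹)·(gh)·h₂ = g h₁ h h₂. -/

import Mathlib

noncomputable section

/-- The `k`-span `k[S]` of a subset `S ⊆ G` inside the group algebra `kG`. -/
def kspan (k : Type*) [CommRing k] {G : Type*} [Group G] (S : Set G) :
    Submodule k (MonoidAlgebra k G) :=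
  Submodule.span k ((fun x => MonoidAlgebra.single x (1 : k)) '' S)

/-- For subgroups `K, H ≤ G` and `g ∈ G` there is an isomorphism of
`(kK,kH)`-bimodules `kK ⊗_{k[K ∩ ᵍH]} k[gH] ≅ k[KgH]`.  The balanced tensor product is
modelled as the quotient of the free `k`-module on `K × H` (with basis `x ⊗ gh` for
`x ∈ K`, `h ∈ H`) by the `k[K ∩ ᵍH]`-balancing relations
`(x·u) ⊗ (g·h) - x ⊗ (u·g·h)` for `u = g·uH·g⁻¹ ∈ K ∩ ᵍH`; here `k[gH]` carries the
`(k[ᵍH], kH)`-bimodule structure `(gh₁g⁻¹)·(gh)·h₂ = g·h₁·h·h₂`.  The isomorphism sends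
the class of `x ⊗ g·h` to `x·g·h ∈ k[KgH]`, so it is an isomorphism of
`(kK,kH)`-bimodules. -/
theorem stmt0 {k : Type*} [CommRing k] {G : Type*} [Group G] [Finite G]
    (K H : Subgroup G) (g : G) :
    ∃ e : (((↥K × ↥H) →₀ k) ⧸ Submodule.span k
        {z : (↥K × ↥H) →₀ k | ∃ (x : K) (h : H) (uK : K) (uH : H),
          (uK : G) = g * (uH : G) * g⁻¹ ∧
          z = Finsupp.single (x * uK, h) 1 - Finsupp.single (x, uH * h) 1})
      ≃ₗ[k] kspan k {w : G | ∃ x ∈ K, ∃ h ∈ H, w = x * g * h},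
      ∀ (x : K) (h : H),
        ((e (Submodule.Quotient.mk (Finsupp.single (x, h) 1)) : MonoidAlgebra k G))
          = MonoidAlgebra.single ((x : G) * g * (h : G)) 1 := by
  classical
  set S : Set G := {w : G | ∃ x ∈ K, ∃ h ∈ H, w = x * g * h} with hS
  set R : Set ((↥K × ↥H) →₀ k) :=
    {z : (↥K × ↥H) →₀ k | ∃ (x : K) (h : H) (uK : K) (uH : H),
      (uK : G) = g * (uH : G) * g⁻¹ ∧
      z = Finsupp.single (x * uK, h) 1 - Finsupp.single (x, uH * h) 1} with hR
  -- forward map on the free module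
  set f0 : ((↥K × ↥H) →₀ k) →ₗ[k] MonoidAlgebra k G :=
    Finsupp.linearCombination k
      (fun p : ↥K × ↥H => MonoidAlgebra.single ((p.1 : G) * g * (p.2 : G)) (1 : k)) with hf0
  have hf0single : ∀ (p : ↥K × ↥H) (b : k),
      f0 (Finsupp.single p b) = b • MonoidAlgebra.single ((p.1 : G) * g * (p.2 : G)) 1 := by
    intro p b
    simp [hf0, Finsupp.linearCombination_single]
  have hmemS : ∀ p : ↥K × ↥H,
      MonoidAlgebra.single ((p.1 : G) * g * (p.2 : G)) (1 : k) ∈ kspan k S := by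
    intro p
    apply Submodule.subset_span
    exact ⟨(p.1 : G) * g * (p.2 : G), ⟨p.1, p.1.2, p.2, p.2.2, rfl⟩, rfl⟩
  have hrange : ∀ v, f0 v ∈ kspan k S := by
    intro v
    induction v using Finsupp.induction_linear with
    | zero => simp
    | add a b ha hb => rw [map_add]; exact add_mem ha hb
    | single p c =>
      rw [hf0single]
      exact Submodule.smul_mem _ _ (hmemS p)
  set f1 : ((↥K × ↥H) →₀ k) →ₗ[k] kspan k S := f0.codRestrict _ hrange with hf1
  have hker : Submodule.span k R ≤ LinearMap.ker f1 := by
    rw [Submodule.span_le]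
    rintro z ⟨x, h, uK, uH, huu, rfl⟩
    have h0 : f0 (Finsupp.single (x * uK, h) 1 - Finsupp.single (x, uH * h) 1) = 0 := by
      rw [map_sub, hf0single, hf0single]
      have heq : ((x * uK : K) : G) * g * (h : G) = (x : G) * g * ((uH * h : H) : G) := by
        push_cast
        rw [huu]
        group
      rw [heq, sub_self]
    simpa [hf1, LinearMap.mem_ker, LinearMap.codRestrict, Subtype.ext_iff] using h0
  set f : (((↥K × ↥H) →₀ k) ⧸ Submodule.span k R) →ₗ[k] kspan k S :=
    Submodule.liftQ _ f1 hker with hf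
  -- key: well-definedness of the inverse choice
  have key : ∀ (x x' : K) (h h' : H), (x : G) * g * h = (x' : G) * g * h' →
      (Submodule.Quotient.mk (Finsupp.single (x, h) (1 : k)) :
        ((↥K × ↥H) →₀ k) ⧸ Submodule.span k R) =
      Submodule.Quotient.mk (Finsupp.single (x', h') 1) := by
    intro x x' h h' hxh
    rw [Submodule.Quotient.eq]
    apply Submodule.subset_span
    refine ⟨x', h, x'⁻¹ * x, h' * h⁻¹, ?_, ?_⟩
    · push_cast
      have : ((x' : G))⁻¹ * ((x : G) * g * (h : G)) * (h : G)⁻¹ =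
          ((x' : G))⁻¹ * ((x' : G) * g * (h' : G)) * (h : G)⁻¹ := by rw [hxh]
      calc ((x' : G))⁻¹ * (x : G)
          = ((x' : G))⁻¹ * ((x : G) * g * (h : G)) * (h : G)⁻¹ * g⁻¹ := by group
        _ = ((x' : G))⁻¹ * ((x' : G) * g * (h' : G)) * (h : G)⁻¹ * g⁻¹ := by rw [hxh]
        _ = g * ((h' : G) * (h : G)⁻¹) * g⁻¹ := by group
    · have e1 : x' * (x'⁻¹ * x) = x := by group
      have e2 : h' * h⁻¹ * h = h' := by group
      rw [e1, e2]
  -- inverse map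
  set c : G → (((↥K × ↥H) →₀ k) ⧸ Submodule.span k R) := fun w =>
    if hw : ∃ x : K, ∃ h : H, w = (x : G) * g * h then
      Submodule.Quotient.mk (Finsupp.single (hw.choose, hw.choose_spec.choose) 1)
    else 0 with hc
  have hcval : ∀ (x : K) (h : H), c ((x : G) * g * h) =
      Submodule.Quotient.mk (Finsupp.single (x, h) 1) := by
    intro x h
    have hw : ∃ x' : K, ∃ h' : H, (x : G) * g * h = (x' : G) * g * h' := ⟨x, h, rfl⟩
    rw [hc]
    simp only [dif_pos hw]
    exact (key _ _ _ _ hw.choose_spec.choose_spec).symm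
  set ψ0 : MonoidAlgebra k G →ₗ[k] (((↥K × ↥H) →₀ k) ⧸ Submodule.span k R) :=
    (Finsupp.linearCombination k c).comp (MonoidAlgebra.coeffLinearEquiv k).toLinearMap with hψ0
  have hψ0single : ∀ (w : G) (b : k), ψ0 (MonoidAlgebra.single w b) = b • c w := by
    intro w b
    exact Finsupp.linearCombination_single (R := k) b w
  set ψ : (kspan k S) →ₗ[k] (((↥K × ↥H) →₀ k) ⧸ Submodule.span k R) :=
    ψ0.comp (kspan k S).subtype with hψ
  have hcoe : ∀ v, ((f1 v : kspan k S) : MonoidAlgebra k G) = f0 v := fun _ => rfl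
  -- f ∘ ψ = id
  have pointwise : ∀ v ∈ kspan k S, ((f (ψ0 v) : kspan k S) : MonoidAlgebra k G) = v := by
    intro v hv
    refine Submodule.span_induction ?_ ?_ ?_ ?_ hv
    · rintro w ⟨w', ⟨x, hx, h, hh, rfl⟩, rfl⟩
      rw [hψ0single, one_smul]
      rw [show (x * g * h : G) = ((⟨x, hx⟩ : K) : G) * g * ((⟨h, hh⟩ : H) : G) from rfl,
        hcval]
      rw [hf, Submodule.liftQ_apply, hcoe, hf0single, one_smul]
    · simp
    · intro a b _ _ ha hb
      rw [map_add, map_add, Submodule.coe_add, ha, hb]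
    · intro a x _ hx
      rw [map_smul, map_smul, SetLike.val_smul, hx]
  have hfg : f.comp ψ = LinearMap.id := by
    apply LinearMap.ext
    rintro ⟨v, hv⟩
    apply Subtype.ext
    exact pointwise v hv
  have hgf : ψ.comp f = LinearMap.id := by
    apply Submodule.linearMap_qext
    apply Finsupp.lhom_ext'
    intro p
    apply LinearMap.ext_ring
    simp only [LinearMap.comp_apply, Finsupp.lsingle_apply, Submodule.mkQ_apply,
      LinearMap.id_apply]
    rw [hf, Submodule.liftQ_apply, hψ]
    simp only [LinearMap.comp_apply, Submodule.subtype_apply]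
    rw [hcoe, hf0single, one_smul]
    rw [show MonoidAlgebra.single ((p.1 : G) * g * (p.2 : G)) (1:k) =
      MonoidAlgebra.single ((p.1 : G) * g * (p.2 : G)) (1:k) from rfl]
    rw [hψ0single, one_smul, hcval]
  refine ⟨LinearEquiv.ofLinear f ψ hfg hgf, ?_⟩
  intro x h
  show ((f (Submodule.Quotient.mk (Finsupp.single (x, h) 1)) : kspan k S) :
    MonoidAlgebra k G) = _
  rw [hf, Submodule.liftQ_apply, hcoe, hf0single, one_smul]
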